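/- Let X and K be finite-dimensional real Hilbert spaces, b ∈ K, and let 𝔏 : X → K be a bounded linear operator such that range 𝔏 = K and 𝔏*𝔏 = P_V, the orthogonal projection onto V := range 𝔏* ⊆ X. Define the affine map 𝔄x := 𝔏x + b. Then for every proper lower-semicontinuous convex function ψ on K and every γ > 0, the Moreau envelope satisfies (⁽γ⁾(ψ ∘ 𝔄))(x) = (⁽γ⁾ψ)(𝔄x) for all x ∈ X. -/

import Mathlib

set_option maxHeartbeats 1000000


noncomputable section

open scoped RealInnerProductSpace

/-- Lemma 3 of the paper, first identity.  If `𝔏 : X → K` is a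
surjective bounded linear operator with `𝔏*𝔏 = P_V` (the orthogonal projection onto
`V = range 𝔏*`), then for every proper l.s.c. convex `ψ : K → (−∞,+∞]` and `γ > 0`,
the Moreau envelope of `ψ ∘ 𝔄` (with `𝔄x = 𝔏x + b`) satisfies
`(ᵞ(ψ ∘ 𝔄))(x) = (ᵞψ)(𝔄x)` for all `x`. -/
theorem moreauEnv_affine_composition
    {X K : Type*}
    [NormedAddCommGroup X] [InnerProductSpace ℝ X] [FiniteDimensional ℝ X]
    [NormedAddCommGroup K] [InnerProductSpace ℝ K] [FiniteDimensional ℝ K]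
    (L : X →L[ℝ] K) (b : K) (hsurj : Function.Surjective L)
    (hproj : ∀ x : X,
      (ContinuousLinearMap.adjoint L) (L x) =
        (Submodule.orthogonalProjectionOnto (LinearMap.range (ContinuousLinearMap.adjoint L : K →ₗ[ℝ] X)) x : X))
    (ψ : K → EReal) (hbot : ∀ u, ψ u ≠ ⊥) (htop : ∃ u, ψ u ≠ ⊤)
    (hlsc : LowerSemicontinuous ψ)
    (hconv : Convex ℝ {p : K × ℝ | ψ p.1 ≤ (p.2 : EReal)})
    (γ : ℝ) (hγ : 0 < γ) :
    ∀ x : X,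
      (⨅ u : X, (ψ (L u + b) + ((‖x - u‖ ^ 2 / (2 * γ) : ℝ) : EReal)))
        = ⨅ w : K, (ψ w + ((‖(L x + b) - w‖ ^ 2 / (2 * γ) : ℝ) : EReal)) := by
  set A := ContinuousLinearMap.adjoint L with hA
  set V := LinearMap.range (A : K →ₗ[ℝ] X) with hV
  -- L ∘ A = id on K
  have hLA : ∀ k : K, L (A k) = k := by
    intro k
    have key : ∀ x' : X, ⟪L (A k) - k, L x'⟫ = 0 := by
      intro x'
      have h1 : ⟪L (A k), L x'⟫ = ⟪A k, A (L x')⟫ :=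
        (ContinuousLinearMap.adjoint_inner_right L (A k) (L x')).symm
      have h2 : A (L x') = (V.orthogonalProjectionOnto x' : X) := hproj x'
      have hmem : A k ∈ V := LinearMap.mem_range_self _ _
      have h3 : ⟪A k, (V.orthogonalProjectionOnto x' : X)⟫
          = ⟪(V.orthogonalProjectionOnto (A k) : X), x'⟫ :=
        by exact (Submodule.inner_starProjection_left_eq_right V (A k) x').symm
      have h4 : (V.orthogonalProjectionOnto (A k) : X) = A k :=
        Submodule.starProjection_eq_self_iff.mpr hmem
      have h5 : ⟪A k, x'⟫ = ⟪k, L x'⟫ :=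
        ContinuousLinearMap.adjoint_inner_left L x' k
      rw [inner_sub_left, h1, h2, h3, h4, h5, sub_self]
    obtain ⟨x', hx'⟩ := hsurj (L (A k) - k)
    have h0 := key x'
    rw [hx'] at h0
    have := inner_self_eq_zero.mp h0
    exact sub_eq_zero.mp this
  -- A is an isometry
  have hAnorm : ∀ k : K, ‖A k‖ = ‖k‖ := by
    intro k
    have h1 : ⟪A k, A k⟫ = ⟪k, L (A k)⟫ :=
      ContinuousLinearMap.adjoint_inner_left L (A k) k
    rw [hLA k] at h1
    have h2 : ‖A k‖ ^ 2 = ‖k‖ ^ 2 := by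
      rw [← real_inner_self_eq_norm_sq, ← real_inner_self_eq_norm_sq, h1]
    have ha := norm_nonneg (A k)
    have hb := norm_nonneg k
    nlinarith [sq_nonneg (‖A k‖ - ‖k‖), sq_nonneg (‖A k‖ + ‖k‖)]
  -- L is a contraction
  have hLnorm : ∀ z : X, ‖L z‖ ≤ ‖z‖ := by
    intro z
    have h1 : ⟪L z, L z⟫ = ⟪z, A (L z)⟫ :=
      (ContinuousLinearMap.adjoint_inner_right L z (L z)).symm
    have h2 : A (L z) = (V.orthogonalProjectionOnto z : X) := hproj z
    set p : X := (V.orthogonalProjectionOnto z : X) with hp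
    have hperp : ⟪p, z - p⟫ = 0 :=
      Submodule.sub_starProjection_mem_orthogonal (K := V) z p (V.orthogonalProjectionOnto z).2
    have h3 : ⟪z, p⟫ = ⟪p, p⟫ := by
      have h := hperp
      rw [real_inner_comm, inner_sub_left, sub_eq_zero] at h
      exact h
    have h4 : ‖L z‖ ^ 2 = ‖p‖ ^ 2 := by
      rw [← real_inner_self_eq_norm_sq, ← real_inner_self_eq_norm_sq, h1, h2]
      exact h3
    have hdecomp : z = p + (z - p) := by abel
    have horth := hperp
    have h5 : ‖p + (z - p)‖ ^ 2 = ‖p‖ ^ 2 + 2 * ⟪p, z - p⟫ + ‖z - p‖ ^ 2 :=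
      norm_add_sq_real p (z - p)
    rw [← hdecomp, horth] at h5
    have h6 : ‖L z‖ ^ 2 ≤ ‖z‖ ^ 2 := by nlinarith [sq_nonneg ‖z - p‖]
    nlinarith [norm_nonneg (L z), norm_nonneg z]
  intro x
  apply le_antisymm
  · refine le_iInf fun w => iInf_le_of_le (x - A (L x + b - w)) (le_of_eq ?_)
    have e1 : L (x - A (L x + b - w)) + b = w := by
      rw [map_sub, hLA]; abel
    have e2 : ‖x - (x - A (L x + b - w))‖ = ‖L x + b - w‖ := by
      rw [sub_sub_cancel, hAnorm]
    rw [e1, e2]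
  · refine le_iInf fun u => iInf_le_of_le (L u + b) ?_
    have e1 : (L x + b) - (L u + b) = L (x - u) := by rw [map_sub]; abel
    have e2 : ‖L (x - u)‖ ^ 2 / (2 * γ) ≤ ‖x - u‖ ^ 2 / (2 * γ) := by
      apply div_le_div_of_nonneg_right _ (by linarith)
      · have := hLnorm (x - u)
        nlinarith [norm_nonneg (L (x - u)), norm_nonneg (x - u)]
    rw [e1]
    exact add_le_add_right (EReal.coe_le_coe_iff.mpr e2) _
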